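/- If M is prime and the total photon number N of a Fock occupation vector n : Fin M → ℕ is not divisible by M, then the orbit of n under the cyclic mode shift has cardinality exactly M. -/

import Mathlib

open Finset
open Fin.NatCast Fin.CommRing

/-- Cyclic mode shift: `(X·n)(m) = n(m-1)` with indices mod `M`. -/
def modeShift {M : ℕ} [NeZero M] (n : Fin M → ℕ) : Fin M → ℕ := fun m => n (m - 1)

/-- Total photon number `|n|`. -/
def totalPhotons {M : ℕ} (n : Fin M → ℕ) : ℕ := ∑ m : Fin M, n m

/-- The Pauli class (orbit) of `n` under the cyclic mode shift. -/
def pauliClass {M : ℕ} [NeZero M] (n : Fin M → ℕ) : Finset (Fin M → ℕ) :=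
  (Finset.range M).image (fun k => modeShift^[k] n)

lemma modeShift_iterate {M : ℕ} [NeZero M] (n : Fin M → ℕ) (k : ℕ) :
    modeShift^[k] n = fun m => n (m - (k : Fin M)) := by
  induction k with
  | zero => simp
  | succ k ih =>
      rw [Function.iterate_succ_apply', ih]
      funext m
      simp only [modeShift]
      congr 1
      push_cast
      ring

theorem pauliClass_card_of_prime (M : ℕ) [NeZero M] (hp : M.Prime) (n : Fin M → ℕ)
    (hN : ¬ M ∣ totalPhotons n) :
    (pauliClass n).card = M := by
  rw [pauliClass, card_image_of_injOn, card_range]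
  intro j hj k hk hjk
  simp only [mem_coe, mem_range] at hj hk
  by_contra hne
  -- wlog j < k
  wlog hlt : j < k generalizing j k
  · exact this (j := k) (k := j) hjk.symm hk hj (Ne.symm hne) (by omega)
  set d := k - j with hd
  have hd0 : 0 < d := by omega
  have hdM : d < M := by omega
  -- n is invariant under subtracting (d : Fin M)
  have key : ∀ m : Fin M, n (m - (d : Fin M)) = n m := by
    intro m
    have := congrFun hjk (m + (j : Fin M))
    simp only [modeShift_iterate, add_sub_cancel_right] at this
    rw [this]
    congr 1
    have : (k : Fin M) = (d : Fin M) + (j : Fin M) := by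
      rw [hd]
      push_cast [Nat.cast_sub (le_of_lt hlt)]
      ring
    rw [this]; ring
  -- iterate: n (m - t • d) = n m
  have key2 : ∀ t : ℕ, ∀ m : Fin M, n (m - ((t * d : ℕ) : Fin M)) = n m := by
    intro t
    induction t with
    | zero => simp
    | succ t ih =>
        intro m
        have : ((((t+1) * d : ℕ)) : Fin M) = ((t * d : ℕ) : Fin M) + (d : Fin M) := by
          push_cast; ring
        rw [this, ← sub_sub, key, ih]
  -- d is invertible mod M
  have hcop : Nat.Coprime d M := by
    rw [Nat.coprime_comm]
    exact (Nat.Prime.coprime_iff_not_dvd hp).mpr (fun h => Nat.not_dvd_of_pos_of_lt hd0 hdM h)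
  have hM1 : 1 < M := hp.one_lt
  obtain ⟨b, -, hb⟩ := Nat.exists_mul_mod_eq_one_of_coprime hcop hM1
  -- n is constant
  have hconst : ∀ m : Fin M, n m = n 0 := by
    intro m
    have ht : (((b * m.val) * d : ℕ) : Fin M) = m := by
      apply Fin.ext
      rw [Fin.val_natCast]
      conv_lhs => rw [show b * m.val * d = m.val * (d * b) by ring]
      rw [Nat.mul_mod, hb, mul_one, Nat.mod_mod_of_dvd _ dvd_rfl, Nat.mod_eq_of_lt m.isLt]
    have := key2 (b * m.val) m
    rw [ht, sub_self] at this
    exact this.symm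
  -- total photons divisible
  apply hN
  have : totalPhotons n = M * n 0 := by
    rw [totalPhotons]
    rw [Finset.sum_congr rfl (fun m _ => hconst m)]
    simp [mul_comm]
  rw [this]
  exact Dvd.intro _ rfl
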